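/- Let n ≥ 5 and 1 ≤ p < q < n/2. There exists an n-th root of unity ζ with ζ^{p+q} = -1 or ζ^{q-p} = -1 (i.e., the quartic circulant graph Circ(n,{p,q}) is singular) if and only if v₂(p+q) < v₂(n) or v₂(q-p) < v₂(n). -/

import Mathlib

open Complex Real

lemma key (n m : ℕ) (hn : 0 < n) (hm : 0 < m) :
    (∃ ζ : ℂ, ζ ^ n = 1 ∧ ζ ^ m = -1) ↔ padicValNat 2 m < padicValNat 2 n := by
  constructor
  · rintro ⟨ζ, h1, h2⟩
    set d := orderOf ζ with hd
    have hdn : d ∣ n := orderOf_dvd_of_pow_eq_one h1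
    have hd2m : d ∣ 2 * m := orderOf_dvd_of_pow_eq_one (by
      rw [mul_comm, pow_mul, h2]; norm_num)
    have hdm : ¬ d ∣ m := by
      intro h
      have := orderOf_dvd_iff_pow_eq_one.mp h
      rw [this] at h2
      norm_num at h2
    have hd0 : d ≠ 0 := by
      intro h
      rw [h, zero_dvd_iff] at hdn
      omega
    have hlt : padicValNat 2 m < padicValNat 2 d := by
      by_contra hle
      push_neg at hle
      apply hdm
      rw [← Nat.factorization_le_iff_dvd hd0 hm.ne']
      intro p
      rcases eq_or_ne p 2 with rfl | hp2
      · rw [Nat.factorization_def _ Nat.prime_two, Nat.factorization_def _ Nat.prime_two]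
        exact hle
      · have h3 : d.factorization p ≤ (2 * m).factorization p :=
          (Nat.factorization_le_iff_dvd hd0 (by positivity)).mpr hd2m p
        rw [Nat.factorization_mul (by norm_num) hm.ne', Finsupp.add_apply,
          Nat.Prime.factorization Nat.prime_two, Finsupp.single_apply,
          if_neg (Ne.symm hp2)] at h3
        simpa using h3
    have hle2 : padicValNat 2 d ≤ padicValNat 2 n := by
      have := (Nat.factorization_le_iff_dvd hd0 hn.ne').mpr hdn 2
      rwa [Nat.factorization_def _ Nat.prime_two, Nat.factorization_def _ Nat.prime_two] at this
    omega
  · intro h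
    set a := padicValNat 2 m with ha
    have h2a : (2 : ℂ) ^ a ≠ 0 := pow_ne_zero _ two_ne_zero
    refine ⟨Complex.exp (π * I / 2 ^ a), ?_, ?_⟩
    · have hdvd : (2 : ℕ) ^ (a + 1) ∣ n :=
        (pow_dvd_pow 2 h).trans pow_padicValNat_dvd
      obtain ⟨t, ht⟩ := hdvd
      rw [ht, pow_mul, ← Complex.exp_nat_mul]
      have : ((2 ^ (a + 1) : ℕ) : ℂ) * (π * I / 2 ^ a) = 2 * π * I := by
        push_cast [pow_succ]
        field_simp
      rw [this, Complex.exp_two_pi_mul_I, one_pow]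
    · have hm2 : m = 2 ^ a * (m / 2 ^ a) := by
        have := Nat.ordProj_mul_ordCompl_eq_self m 2
        rw [Nat.factorization_def _ Nat.prime_two] at this
        exact this.symm
      have hodd : Odd (m / 2 ^ a) := by
        have := Nat.not_dvd_ordCompl Nat.prime_two hm.ne'
        rw [Nat.factorization_def _ Nat.prime_two] at this
        exact Nat.odd_iff.mpr (Nat.two_dvd_ne_zero.mp this)
      rw [hm2, pow_mul, ← Complex.exp_nat_mul]
      have : ((2 ^ a : ℕ) : ℂ) * (π * I / 2 ^ a) = π * I := by
        push_cast
        field_simp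
      rw [this, Complex.exp_pi_mul_I, hodd.neg_one_pow]

theorem stmt_11 (n p q : ℕ) (hn : 5 ≤ n) (hp : 1 ≤ p) (hpq : p < q) (hq : 2 * q < n) :
    (∃ ζ : ℂ, ζ ^ n = 1 ∧ (ζ ^ (p + q) = -1 ∨ ζ ^ (q - p) = -1)) ↔
      padicValNat 2 (p + q) < padicValNat 2 n ∨
        padicValNat 2 (q - p) < padicValNat 2 n := by
  have hn0 : 0 < n := by omega
  have h1 := key n (p + q) hn0 (by omega)
  have h2 := key n (q - p) hn0 (by omega)
  constructor
  · rintro ⟨ζ, hζ, h | h⟩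
    · exact Or.inl (h1.mp ⟨ζ, hζ, h⟩)
    · exact Or.inr (h2.mp ⟨ζ, hζ, h⟩)
  · rintro (h | h)
    · obtain ⟨ζ, hζ, hh⟩ := h1.mpr h
      exact ⟨ζ, hζ, Or.inl hh⟩
    · obtain ⟨ζ, hζ, hh⟩ := h2.mpr h
      exact ⟨ζ, hζ, Or.inr hh⟩
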